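/- If π(i) > π(j) for positions i < j and there exists a position m with i < m < j such that π(m) > π(i), then in S(π) the letter π(i) still appears before the letter π(j) (the inversion is preserved as a pair of values in that order). -/

import Mathlib

/-- Pop from the stack (top first) all letters smaller than `x`;
returns (popped output, remaining stack). -/
def stackPop (x : ℕ) : List ℕ → List ℕ × List ℕ
  | [] => ([], [])
  | t :: ts =>
    if t < x then
      let p := stackPop x ts
      (t :: p.1, p.2)
    else ([], t :: ts)

/-- Run the stack-sorting procedure with the given stack and input;
at the end the (increasing) stack is flushed to the output. -/
def stackRun : List ℕ → List ℕ → List ℕ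
  | stack, [] => stack
  | stack, x :: xs =>
    let p := stackPop x stack
    p.1 ++ stackRun (x :: p.2) xs

/-- The stack-sort operator: one pass of a permutation (word) through a stack. -/
def S (w : List ℕ) : List ℕ := stackRun [] w

/-- `w` is (the one-line notation of) a permutation of `{1, …, n}`. -/
def IsPermOf (w : List ℕ) (n : ℕ) : Prop := w.Perm (List.range' 1 n)

/-- The identity permutation `1 2 ⋯ n` in one-line notation. -/
def idPerm (n : ℕ) : List ℕ := List.range' 1 n

/-- Process input through the stack, returning (output, final stack). -/
def proc : List ℕ → List ℕ → List ℕ × List ℕ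
  | st, [] => ([], st)
  | st, x :: xs =>
    let p := stackPop x st
    let q := proc (x :: p.2) xs
    (p.1 ++ q.1, q.2)

lemma stackPop_append (x : ℕ) : ∀ st : List ℕ,
    (stackPop x st).1 ++ (stackPop x st).2 = st := by
  intro st
  induction st with
  | nil => simp [stackPop]
  | cons t ts ih =>
    by_cases h : t < x
    · simp [stackPop, h, ih]
    · simp [stackPop, h]

lemma stackPop_snd_ge (x : ℕ) : ∀ st : List ℕ, st.Pairwise (· ≤ ·) →
    ∀ y ∈ (stackPop x st).2, x ≤ y := by
  intro st
  induction st with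
  | nil => intro _ y hy; simp [stackPop] at hy
  | cons t ts ih =>
    intro hs y hy
    rw [List.pairwise_cons] at hs
    by_cases h : t < x
    · simp only [stackPop, if_pos h] at hy
      exact ih hs.2 y hy
    · simp only [stackPop, if_neg h] at hy
      rcases List.mem_cons.mp hy with rfl | hy
      · omega
      · have := hs.1 y hy; omega

lemma stackPop_snd_sorted (x : ℕ) : ∀ st : List ℕ, st.Pairwise (· ≤ ·) →
    (stackPop x st).2.Pairwise (· ≤ ·) := by
  intro st
  induction st with
  | nil => intro _; simp [stackPop]
  | cons t ts ih =>
    intro hs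
    rw [List.pairwise_cons] at hs
    by_cases h : t < x
    · simp only [stackPop, if_pos h]
      exact ih hs.2
    · simp only [stackPop, if_neg h]
      exact List.pairwise_cons.mpr hs

lemma push_sorted (x : ℕ) (st : List ℕ) (hs : st.Pairwise (· ≤ ·)) :
    (x :: (stackPop x st).2).Pairwise (· ≤ ·) :=
  List.pairwise_cons.mpr ⟨stackPop_snd_ge x st hs, stackPop_snd_sorted x st hs⟩

lemma proc_sorted : ∀ (u st : List ℕ), st.Pairwise (· ≤ ·) →
    (proc st u).2.Pairwise (· ≤ ·) := by
  intro u
  induction u with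
  | nil => intro st hs; simpa [proc] using hs
  | cons x xs ih =>
    intro st hs
    simp only [proc]
    exact ih _ (push_sorted x st hs)

lemma proc_perm : ∀ (u st : List ℕ),
    ((proc st u).1 ++ (proc st u).2).Perm (st ++ u) := by
  intro u
  induction u with
  | nil => intro st; simp [proc]
  | cons x xs ih =>
    intro st
    simp only [proc]
    rw [List.append_assoc]
    refine ((ih _).append_left _).trans ?_
    have h2 : ((stackPop x st).1 ++ ((x :: (stackPop x st).2) ++ xs)).Perm
        (x :: (st ++ xs)) := by
      have h3 := List.perm_middle (a := x) (l₁ := (stackPop x st).1)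
        (l₂ := (stackPop x st).2 ++ xs)
      rw [← List.append_assoc, stackPop_append] at h3
      simpa using h3
    exact h2.trans List.perm_middle.symm

lemma proc_append : ∀ (u v st : List ℕ),
    proc st (u ++ v) = ((proc st u).1 ++ (proc (proc st u).2 v).1,
      (proc (proc st u).2 v).2) := by
  intro u
  induction u with
  | nil => intro v st; simp [proc]
  | cons x xs ih =>
    intro v st
    simp only [List.cons_append, proc, List.append_eq, ih, List.append_assoc]

lemma stackRun_append : ∀ (u v st : List ℕ),
    stackRun st (u ++ v) = (proc st u).1 ++ stackRun (proc st u).2 v := by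
  intro u
  induction u with
  | nil => intro v st; simp [proc]
  | cons x xs ih =>
    intro v st
    simp only [List.cons_append, stackRun, proc, List.append_eq, ih, List.append_assoc]

/-- if `w i > w j` for positions `i < j` and some letter strictly
between them exceeds `w i`, then in `S w` the letter `w i` still precedes
`w j` (the inversion is preserved). -/
theorem inversion_preserved (n : ℕ) (w : List ℕ) (hw : IsPermOf w n)
    (i j : Fin w.length) (hij : i < j) (hval : w.get j < w.get i)
    (m : Fin w.length) (him : i < m) (hmj : m < j) (hm : w.get i < w.get m) :
    (S w).idxOf (w.get i) < (S w).idxOf (w.get j) := by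
  have hnd : w.Nodup := hw.nodup_iff.mpr (List.nodup_range' (s := 1) (n := n))
  set a := w.get i with ha
  set b := w.get j with hb
  set c := w.get m with hc
  have hmlt : (m : ℕ) < w.length := m.2
  have hjlt : (j : ℕ) < w.length := j.2
  -- decomposition of w
  set P := w.take ((m : ℕ) + 1) with hP
  set Q := w.drop ((m : ℕ) + 1) with hQ
  have hsplit : w = P ++ Q := (List.take_append_drop _ _).symm
  set O := (proc [] P).1 with hO
  set stk := (proc [] P).2 with hstk
  have hSw : S w = O ++ stackRun stk Q := by
    rw [S]; conv_lhs => rw [hsplit]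
    rw [stackRun_append]
  -- a ∈ P
  have haP : a ∈ P := by
    have hi : (i : ℕ) < P.length := by
      simp [hP, List.length_take]; omega
    have : P[(i : ℕ)]'hi = a := by
      simp only [hP, List.getElem_take]; simp [ha, List.get_eq_getElem]
    exact this ▸ List.getElem_mem hi
  -- structure of stk : everything in it is ≥ c
  have hPsucc : P = w.take (m : ℕ) ++ [c] := by
    rw [hP, List.take_succ]
    congr 1
    rw [List.getElem?_eq_getElem hmlt]
    simp [hc, List.get_eq_getElem]
  have hstk_ge : ∀ y ∈ stk, c ≤ y := by
    have hsorted : ((proc [] (w.take (m : ℕ))).2).Pairwise (· ≤ ·) :=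
      proc_sorted _ [] (by simp)
    intro y hy
    rw [hstk, hPsucc, proc_append] at hy
    simp only [proc] at hy
    rcases List.mem_cons.mp hy with rfl | hy
    · exact le_refl _
    · exact stackPop_snd_ge c _ hsorted y hy
  -- a ∈ O
  have hperm : (O ++ stk).Perm P := by
    have := proc_perm P []
    simpa using this
  have haO : a ∈ O := by
    have : a ∈ O ++ stk := hperm.mem_iff.mpr haP
    rcases List.mem_append.mp this with h | h
    · exact h
    · exact absurd (hstk_ge a h) (by omega)
  -- b ∉ P, hence b ∉ O
  have hbQ : b ∈ Q := by
    have hj' : (j : ℕ) - ((m : ℕ) + 1) < Q.length := by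
      simp [hQ, List.length_drop]; omega
    have e : (m : ℕ) + 1 + ((j : ℕ) - ((m : ℕ) + 1)) = (j : ℕ) := by omega
    have : Q[(j : ℕ) - ((m : ℕ) + 1)]'hj' = b := by
      simp only [hQ, List.getElem_drop, e]
      simp [hb, List.get_eq_getElem]
    exact this ▸ List.getElem_mem hj'
  have hbP : b ∉ P := by
    have hnd2 : (P ++ Q).Nodup := by rw [← hsplit]; exact hnd
    exact fun h => List.disjoint_of_nodup_append hnd2 h hbQ
  have hbO : b ∉ O := fun h =>
    hbP (hperm.mem_iff.mp (List.mem_append.mpr (Or.inl h)))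
  -- conclude
  rw [hSw, List.idxOf_append_of_mem haO, List.idxOf_append_of_notMem hbO]
  have : List.idxOf a O < O.length := List.idxOf_lt_length_iff.mpr haO
  omega
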